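/- In the d-Type Specialization Model, fix two distinct workers a and b with (fixed) types w_a, w_b ∈ {1,…,d}, and let i be a task whose type t_i is uniform on {1,…,d} and whose responses M_ia, M_ib are generated by the model independently given the types. If w_a = w_b, then P(M_ia = M_ib) = 1/2 + (2p-1)²/(2d); if w_a ≠ w_b, then P(M_ia = M_ib) = 1/2. -/

import Mathlib

open MeasureTheory

lemma key_partition {Ω : Type*} [MeasurableSpace Ω] (μ : Measure Ω) [IsProbabilityMeasure μ]
    {ι : Type*} [Fintype ι] [DecidableEq ι] (g : ι → Set Ω) (S : Finset ι) (A : Set Ω)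
    (hA : A ⊆ ⋃ i ∈ S, g i)
    (hAc : Aᶜ ⊆ ⋃ i ∈ Sᶜ, g i)
    (htot : ∑ i, μ (g i) = 1) :
    μ A = ∑ i ∈ S, μ (g i) := by
  have h1 : μ A ≤ ∑ i ∈ S, μ (g i) :=
    le_trans (measure_mono hA) (measure_biUnion_finset_le S g)
  have h2 : μ Aᶜ ≤ ∑ i ∈ Sᶜ, μ (g i) :=
    le_trans (measure_mono hAc) (measure_biUnion_finset_le Sᶜ g)
  have hsplit : ∑ i ∈ S, μ (g i) + ∑ i ∈ Sᶜ, μ (g i) = 1 := by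
    rw [Finset.sum_add_sum_compl]; exact htot
  have hfin : ∑ i ∈ Sᶜ, μ (g i) ≠ ⊤ := by
    intro h
    rw [h] at hsplit
    simp at hsplit
  have h3 : (1 : ENNReal) ≤ μ A + μ Aᶜ := by
    have := measure_union_le (μ := μ) A Aᶜ
    rw [Set.union_compl_self, measure_univ] at this
    exact this
  refine le_antisymm h1 ?_
  have h4 : ∑ i ∈ S, μ (g i) + ∑ i ∈ Sᶜ, μ (g i) ≤ μ A + ∑ i ∈ Sᶜ, μ (g i) := by
    calc ∑ i ∈ S, μ (g i) + ∑ i ∈ Sᶜ, μ (g i) = 1 := hsplit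
    _ ≤ μ A + μ Aᶜ := h3
    _ ≤ μ A + ∑ i ∈ Sᶜ, μ (g i) := add_le_add_right h2 _
  exact (ENNReal.add_le_add_iff_right hfin).mp h4

/-- in the d-Type Specialization Model, for two distinct workers with fixed types
`wa, wb` and a task with uniformly random type, the probability that the two responses agree is
`1/2 + (2p−1)²/(2d)` when `wa = wb` and `1/2` when `wa ≠ wb`.  The joint law of the task type
and the two (conditionally independent) responses is specified by `hjoint`. -/
theorem stmt_6 {Ω : Type*} [MeasurableSpace Ω] (μ : Measure Ω) [IsProbabilityMeasure μ]
    (d : ℕ) (hd : 1 ≤ d) (p : ℝ) (hp : p ∈ Set.Ioc (1/2 : ℝ) 1)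
    (wa wb : Fin d) (ai : ℝ) (hai : ai = 1 ∨ ai = -1)
    (t : Ω → Fin d) (Ma Mb : Ω → ℝ)
    (hMaval : ∀ ω, Ma ω = ai ∨ Ma ω = -ai) (hMbval : ∀ ω, Mb ω = ai ∨ Mb ω = -ai)
    (hjoint : ∀ (z : Fin d) (sa sb : Bool),
      μ {ω | t ω = z ∧ (Ma ω = ai) = sa ∧ (Mb ω = ai) = sb} =
        ENNReal.ofReal ((1/(d:ℝ)) *
          (if sa then (if z = wa then p else 1/2) else 1 - (if z = wa then p else 1/2)) *
          (if sb then (if z = wb then p else 1/2) else 1 - (if z = wb then p else 1/2)))) :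
    (wa = wb → μ {ω | Ma ω = Mb ω} = ENNReal.ofReal (1/2 + (2*p - 1)^2/(2*d))) ∧
    (wa ≠ wb → μ {ω | Ma ω = Mb ω} = ENNReal.ofReal (1/2)) := by
  classical
  have hdR : (0:ℝ) < d := by exact_mod_cast hd
  have hdne : (d:ℝ) ≠ 0 := ne_of_gt hdR
  have hne : ai ≠ -ai := by rcases hai with h | h <;> rw [h] <;> norm_num
  set g : Fin d × Bool × Bool → Set Ω :=
    fun x => {ω | t ω = x.1 ∧ (Ma ω = ai) = x.2.1 ∧ (Mb ω = ai) = x.2.2} with hg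
  set r : Fin d × Bool × Bool → ℝ := fun x =>
    (1/(d:ℝ)) *
      (if x.2.1 then (if x.1 = wa then p else 1/2) else 1 - (if x.1 = wa then p else 1/2)) *
      (if x.2.2 then (if x.1 = wb then p else 1/2) else 1 - (if x.1 = wb then p else 1/2))
    with hr
  have hμg : ∀ x, μ (g x) = ENNReal.ofReal (r x) := fun ⟨z, sa, sb⟩ => hjoint z sa sb
  -- explicit values of r on the four boolean combinations
  have htt : ∀ z, r (z, true, true) =
      (1/(d:ℝ)) * (if z = wa then p else 1/2) * (if z = wb then p else 1/2) := by
    intro z; simp [hr]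
  have htf : ∀ z, r (z, true, false) =
      (1/(d:ℝ)) * (if z = wa then p else 1/2) * (1 - (if z = wb then p else 1/2)) := by
    intro z; simp [hr]
  have hft : ∀ z, r (z, false, true) =
      (1/(d:ℝ)) * (1 - (if z = wa then p else 1/2)) * (if z = wb then p else 1/2) := by
    intro z; simp [hr]
  have hff : ∀ z, r (z, false, false) =
      (1/(d:ℝ)) * (1 - (if z = wa then p else 1/2)) * (1 - (if z = wb then p else 1/2)) := by
    intro z; simp [hr]
  have hAB : ∀ (b : Bool) (w z : Fin d),
      0 ≤ (if b then (if z = w then p else 1/2) else 1 - (if z = w then p else 1/2) : ℝ) := by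
    intro b w z
    cases b <;> simp only [if_true, Bool.false_eq_true, if_false] <;> split <;>
      linarith [hp.1, hp.2]
  have hr0 : ∀ x, 0 ≤ r x := by
    rintro ⟨z, sa, sb⟩
    have h0 : (0:ℝ) ≤ 1/(d:ℝ) := by positivity
    exact mul_nonneg (mul_nonneg h0 (hAB sa wa z)) (hAB sb wb z)
  have hmem : ∀ ω, (Ma ω = Mb ω) ↔ ((Ma ω = ai) ↔ (Mb ω = ai)) := by
    intro ω
    rcases hMaval ω with ha | ha <;> rcases hMbval ω with hb | hb <;>
      rw [ha, hb] <;> simp [hne, hne.symm] <;> tauto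
  have hA : {ω | Ma ω = Mb ω} ⊆
      ⋃ x ∈ Finset.univ.filter (fun x : Fin d × Bool × Bool => x.2.1 = x.2.2), g x := by
    intro ω hω
    simp only [Set.mem_iUnion, Finset.mem_filter, Finset.mem_univ, true_and]
    by_cases ha : Ma ω = ai
    · have hb : Mb ω = ai := ((hmem ω).mp hω).mp ha
      exact ⟨(t ω, true, true), rfl, rfl, by simp [hg, ha, hb]⟩
    · have hb : ¬ Mb ω = ai := fun h => ha (((hmem ω).mp hω).mpr h)
      exact ⟨(t ω, false, false), rfl, rfl, by simp [hg, ha, hb]⟩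
  have hAc : {ω | Ma ω = Mb ω}ᶜ ⊆
      ⋃ x ∈ (Finset.univ.filter (fun x : Fin d × Bool × Bool => x.2.1 = x.2.2))ᶜ, g x := by
    intro ω hω
    simp only [Set.mem_compl_iff, Set.mem_setOf_eq] at hω
    simp only [Set.mem_iUnion, Finset.mem_compl, Finset.mem_filter, Finset.mem_univ, true_and]
    by_cases ha : Ma ω = ai
    · have hb : ¬ Mb ω = ai := fun h => hω ((hmem ω).mpr ⟨fun _ => h, fun _ => ha⟩)
      exact ⟨(t ω, true, false), by simp, by simp [hg, ha, hb]⟩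
    · have hb : Mb ω = ai := by
        rcases hMbval ω with h | h
        · exact h
        · exfalso
          rcases hMaval ω with h' | h'
          · exact ha h'
          · exact hω (h'.trans h.symm)
      exact ⟨(t ω, false, true), by simp, by simp [hg, ha, hb]⟩
  have htot : ∑ x : Fin d × Bool × Bool, μ (g x) = 1 := by
    simp_rw [hμg]
    rw [← ENNReal.ofReal_sum_of_nonneg (fun x _ => hr0 x)]
    have h1 : ∑ x : Fin d × Bool × Bool, r x = 1 := by
      rw [Fintype.sum_prod_type]
      have h2 : ∀ z : Fin d, ∑ y : Bool × Bool, r (z, y) = 1/(d:ℝ) := by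
        intro z
        rw [Fintype.sum_prod_type, Fintype.sum_bool, Fintype.sum_bool, Fintype.sum_bool,
          htt z, htf z, hft z, hff z]
        ring
      simp_rw [h2, Finset.sum_const, Finset.card_univ, Fintype.card_fin, nsmul_eq_mul]
      field_simp
    rw [h1, ENNReal.ofReal_one]
  have hkey := key_partition μ g
    (Finset.univ.filter (fun x : Fin d × Bool × Bool => x.2.1 = x.2.2))
    {ω | Ma ω = Mb ω} hA hAc htot
  have hagree : ∀ z : Fin d,
      (∑ y : Bool × Bool, if y.1 = y.2 then r (z, y) else 0) =
        r (z, true, true) + r (z, false, false) := by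
    intro z
    rw [Fintype.sum_prod_type, Fintype.sum_bool, Fintype.sum_bool, Fintype.sum_bool]
    norm_num
  have hsum : μ {ω | Ma ω = Mb ω} =
      ENNReal.ofReal (∑ z : Fin d, (r (z, true, true) + r (z, false, false))) := by
    rw [hkey]
    simp_rw [hμg]
    rw [← ENNReal.ofReal_sum_of_nonneg (fun x _ => hr0 x)]
    congr 1
    rw [Finset.sum_filter, Fintype.sum_prod_type]
    exact Finset.sum_congr rfl fun z _ => hagree z
  constructor
  · intro hww
    subst hww
    rw [hsum]
    congr 1
    have hGz : ∀ z : Fin d, r (z, true, true) + r (z, false, false) =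
        1/(2*(d:ℝ)) + (if z = wa then (2*p-1)^2/(2*(d:ℝ)) else 0) := by
      intro z
      rw [htt z, hff z]
      by_cases h : z = wa
      · simp only [h, if_true]
        field_simp
        ring
      · simp only [if_neg h]
        field_simp
        ring
    simp_rw [hGz]
    rw [Finset.sum_add_distrib, Finset.sum_const, Finset.card_univ, Fintype.card_fin,
      nsmul_eq_mul, Finset.sum_ite_eq' Finset.univ wa, if_pos (Finset.mem_univ wa)]
    field_simp
  · intro hww
    rw [hsum]
    congr 1
    have hGz : ∀ z : Fin d, r (z, true, true) + r (z, false, false) = 1/(2*(d:ℝ)) := by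
      intro z
      rw [htt z, hff z]
      by_cases h1 : z = wa
      · have h2 : ¬ z = wb := by rw [h1]; exact hww
        simp only [if_pos h1, if_neg h2]
        ring
      · by_cases h2 : z = wb
        · simp only [if_neg h1, if_pos h2]
          ring
        · simp only [if_neg h1, if_neg h2]
          ring
    simp_rw [hGz]
    rw [Finset.sum_const, Finset.card_univ, Fintype.card_fin, nsmul_eq_mul]
    field_simp
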